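/- If R_λ maps C₀(E) into C₀(E) for some (equivalently all) λ > 0, and the range R C₀(E) is dense in C₀(E), then U_t maps C₀(E) into C₀(E) for all t ≥ 0. -/

import Mathlib

open MeasureTheory ProbabilityTheory Filter Topology Set

/-- The semigroup of a Markov process, given by its transition kernels:
`Usg κ t f x = E_x[f(X_t)] = ∫ f(y) κ_t(x, dy)`. -/
noncomputable def Usg {E : Type*} [MeasurableSpace E] (κ : ℝ → Kernel E E)
    (t : ℝ) (f : E → ℝ) (x : E) : ℝ := ∫ y, f y ∂(κ t x)

/-- The resolvent `R_λ f x = ∫_0^∞ e^{-λ t} U_t f x dt`. -/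
noncomputable def Res {E : Type*} [MeasurableSpace E] (κ : ℝ → Kernel E E)
    (l : ℝ) (f : E → ℝ) (x : E) : ℝ :=
  ∫ t in Set.Ioi (0:ℝ), Real.exp (-l * t) * Usg κ t f x

/-- `f ∈ C₀(E)`: continuous and vanishing at infinity. -/
def MemC0 {E : Type*} [TopologicalSpace E] (f : E → ℝ) : Prop :=
  Continuous f ∧ Filter.Tendsto f (Filter.cocompact E) (nhds 0)

section C0
variable {E : Type*} [MetricSpace E]

lemma memC0_bounded {f : E → ℝ} (hf : MemC0 f) : ∃ D : ℝ, 0 ≤ D ∧ ∀ x, |f x| ≤ D := by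
  obtain ⟨hc, ht⟩ := hf
  have h1 : ∀ᶠ x in cocompact E, dist (f x) 0 < 1 := Metric.tendsto_nhds.mp ht 1 one_pos
  rw [(hasBasis_cocompact).eventually_iff] at h1
  obtain ⟨K, hK, hKb⟩ := h1
  obtain ⟨C, hC⟩ := hK.exists_bound_of_continuousOn hc.continuousOn
  refine ⟨max C 1, le_max_of_le_right zero_le_one, fun x => ?_⟩
  by_cases hx : x ∈ K
  · exact le_max_of_le_left (hC x hx)
  · have := hKb hx
    rw [dist_zero_right] at this
    exact le_max_of_le_right this.le

lemma memC0_approx {f : E → ℝ}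
    (h : ∀ ε : ℝ, 0 < ε → ∃ g : E → ℝ, MemC0 g ∧ ∀ x, |g x - f x| ≤ ε) : MemC0 f := by
  choose g hg hgf using fun n : ℕ => h (1 / (n + 1)) (by positivity)
  have hunif : TendstoUniformly g f atTop := by
    rw [Metric.tendstoUniformly_iff]
    intro ε hε
    obtain ⟨N, hN⟩ := exists_nat_gt (1 / ε)
    filter_upwards [eventually_ge_atTop N] with n hn x
    have h1 : (1 : ℝ) / (n + 1) < ε := by
      rw [div_lt_iff₀ (by positivity)]
      rw [div_lt_iff₀ hε] at hN
      calc (1:ℝ) = 1 := rfl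
      _ < ε * N := by linarith [hN]
      _ ≤ ε * (n + 1) := by
          have : (N : ℝ) ≤ n + 1 := by exact_mod_cast Nat.le_succ_of_le hn
          nlinarith
    have := hgf n x
    rw [dist_comm, dist_eq_norm]
    calc ‖g n x - f x‖ = |g n x - f x| := rfl
      _ ≤ 1 / (n + 1) := this
      _ < ε := h1
  constructor
  · exact hunif.continuous (Frequently.of_forall fun n => (hg n).1)
  · rw [Metric.tendsto_nhds]
    intro ε hε
    obtain ⟨g₀, hg₀, hgf₀⟩ := h (ε / 3) (by positivity)
    have := Metric.tendsto_nhds.mp hg₀.2 (ε / 3) (by positivity)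
    filter_upwards [this] with x hx
    rw [dist_zero_right] at hx ⊢
    have h1 : |g₀ x - f x| ≤ ε / 3 := hgf₀ x
    have : ‖f x‖ ≤ ‖g₀ x‖ + |g₀ x - f x| := by
      rw [Real.norm_eq_abs, Real.norm_eq_abs]
      have := abs_sub_abs_le_abs_sub (f x) (g₀ x)
      have h2 : |f x - g₀ x| = |g₀ x - f x| := abs_sub_comm _ _
      linarith [abs_sub_abs_le_abs_sub (f x) (g₀ x), h2 ▸ (le_refl (|f x - g₀ x|))]
    linarith

lemma memC0_const_mul {f : E → ℝ} (c : ℝ) (hf : MemC0 f) : MemC0 fun x => c * f x := by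
  refine ⟨continuous_const.mul hf.1, ?_⟩
  have := hf.2.const_mul c
  simpa using this

lemma memC0_add {f g : E → ℝ} (hf : MemC0 f) (hg : MemC0 g) : MemC0 fun x => f x + g x := by
  refine ⟨hf.1.add hg.1, ?_⟩
  have := hf.2.add hg.2
  simpa using this

lemma memC0_sum {ι : Type*} (s : Finset ι) (f : ι → E → ℝ) (h : ∀ i ∈ s, MemC0 (f i)) :
    MemC0 fun x => ∑ i ∈ s, f i x := by
  classical
  induction s using Finset.induction_on with
  | empty => exact ⟨continuous_const, by simpa using tendsto_const_nhds⟩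
  | insert a s hni ih =>
    simp only [Finset.sum_insert hni]
    exact memC0_add (h a (Finset.mem_insert_self a s))
      (ih fun i hi => h i (Finset.mem_insert_of_mem hi))

end C0

section U
variable {E : Type*} [MeasurableSpace E] (κ : ℝ → Kernel E E)

/-- Bochner integral against a composed kernel. -/
lemma integral_comp_kernel {η ξ : Kernel E E} [IsMarkovKernel η] [IsMarkovKernel ξ] (a : E)
    {g : E → ℝ} (hg : Measurable g) {D : ℝ} (hD : ∀ z, |g z| ≤ D) :
    ∫ z, g z ∂((η ∘ₖ ξ) a) = ∫ y, (∫ z, g z ∂(η y)) ∂(ξ a) := by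
  rw [Kernel.comp_eq_snd_compProd, Kernel.snd_apply, integral_map measurable_snd.aemeasurable
    hg.stronglyMeasurable.aestronglyMeasurable]
  rw [ProbabilityTheory.integral_compProd]
  · simp [Kernel.prodMkLeft_apply]
  · refine Integrable.mono' (integrable_const D) ?_ ?_
    · exact (hg.comp measurable_snd).stronglyMeasurable.aestronglyMeasurable
    · exact Eventually.of_forall fun p => by simpa using hD p.2

variable (hk : ∀ t, 0 ≤ t → IsMarkovKernel (κ t))
  (hsemi : ∀ t s, 0 ≤ t → 0 ≤ s → κ (t + s) = (κ s).comp (κ t))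
  (hjm : ∀ g : E → ℝ, Measurable g → (∃ D, ∀ x, |g x| ≤ D) →
      Measurable fun p : ℝ × E => Usg κ p.1 g p.2)

include hk in
lemma usg_bound {t : ℝ} (ht : 0 ≤ t) {g : E → ℝ} (hg : Measurable g) {D : ℝ}
    (hD0 : 0 ≤ D) (hD : ∀ z, |g z| ≤ D) (x : E) : |Usg κ t g x| ≤ D := by
  haveI := hk t ht
  have : ‖∫ y, g y ∂(κ t x)‖ ≤ D * ((κ t x) Set.univ).toReal :=
    norm_integral_le_of_norm_le_const (Eventually.of_forall fun y => by simpa using hD y)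
  simpa [Usg, measure_univ] using this

include hk in
lemma usg_integrable {t : ℝ} (ht : 0 ≤ t) {g : E → ℝ} (hg : Measurable g) {D : ℝ}
    (hD : ∀ z, |g z| ≤ D) (x : E) : Integrable g (κ t x) := by
  haveI := hk t ht
  refine Integrable.mono' (integrable_const D) hg.stronglyMeasurable.aestronglyMeasurable ?_
  exact Eventually.of_forall fun y => by simpa using hD y

include hjm in
lemma usg_measurable_x (t : ℝ) {g : E → ℝ} (hg : Measurable g) {D : ℝ}
    (hD : ∀ z, |g z| ≤ D) : Measurable fun x => Usg κ t g x :=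
  (hjm g hg ⟨D, hD⟩).comp (measurable_const.prodMk measurable_id)

include hjm in
lemma usg_measurable_t (x : E) {g : E → ℝ} (hg : Measurable g) {D : ℝ}
    (hD : ∀ z, |g z| ≤ D) : Measurable fun t => Usg κ t g x :=
  (hjm g hg ⟨D, hD⟩).comp (measurable_id.prodMk measurable_const)

include hk hsemi in
lemma usg_add {t s : ℝ} (ht : 0 ≤ t) (hs : 0 ≤ s) {g : E → ℝ} (hg : Measurable g) {D : ℝ}
    (hD : ∀ z, |g z| ≤ D) (x : E) : Usg κ (t + s) g x = Usg κ t (Usg κ s g) x := by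
  haveI := hk t ht; haveI := hk s hs
  unfold Usg
  rw [hsemi t s ht hs]
  exact integral_comp_kernel (a := x) hg hD

include hk in
lemma usg_sub {t : ℝ} (ht : 0 ≤ t) {g₁ g₂ : E → ℝ} (hg₁ : Measurable g₁) (hg₂ : Measurable g₂)
    {D₁ D₂ : ℝ} (hD₁ : ∀ z, |g₁ z| ≤ D₁) (hD₂ : ∀ z, |g₂ z| ≤ D₂) (x : E) :
    Usg κ t g₁ x - Usg κ t g₂ x = Usg κ t (fun y => g₁ y - g₂ y) x := by
  haveI := hk t ht
  exact (integral_sub (usg_integrable κ hk ht hg₁ hD₁ x) (usg_integrable κ hk ht hg₂ hD₂ x)).symm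

end U

/-- `∫_{Ioi a} exp (-b u) du = exp (-b a) / b`. -/
lemma integral_exp_neg_mul_Ioi {b : ℝ} (hb : 0 < b) (a : ℝ) :
    ∫ u in Set.Ioi a, Real.exp (-b * u) = Real.exp (-b * a) / b := by
  have := MeasureTheory.integral_comp_mul_left_Ioi (fun x => Real.exp (-x)) a hb
  simp only [smul_eq_mul] at this
  have h2 : ∀ x : ℝ, Real.exp (-(b * x)) = Real.exp (-b * x) := by intro x; ring_nf
  rw [integral_exp_neg_Ioi] at this
  calc ∫ u in Set.Ioi a, Real.exp (-b * u)
      = ∫ u in Set.Ioi a, Real.exp (-(b * u)) := by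
        congr 1; funext u; ring_nf
    _ = b⁻¹ * Real.exp (-(b * a)) := this
    _ = Real.exp (-b * a) / b := by rw [neg_mul]; ring

/-- `∫_{Ioc a c} exp (-b u) du = (exp (-b a) - exp (-b c)) / b`. -/
lemma integral_exp_neg_mul_Ioc {b : ℝ} (hb : 0 < b) {a c : ℝ} (hac : a ≤ c) :
    ∫ u in Set.Ioc a c, Real.exp (-b * u) = (Real.exp (-b * a) - Real.exp (-b * c)) / b := by
  have h1 : Set.Ioi a = Set.Ioc a c ∪ Set.Ioi c := (Set.Ioc_union_Ioi_eq_Ioi hac).symm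
  have hint1 : MeasureTheory.IntegrableOn (fun u => Real.exp (-b * u)) (Set.Ioi a) :=
    exp_neg_integrableOn_Ioi a hb
  have hIoc : MeasureTheory.IntegrableOn (fun u => Real.exp (-b * u)) (Set.Ioc a c) :=
    hint1.mono_set (Set.Ioc_subset_Ioi_self)
  have hIoi : MeasureTheory.IntegrableOn (fun u => Real.exp (-b * u)) (Set.Ioi c) :=
    exp_neg_integrableOn_Ioi c hb
  have hdisj : Disjoint (Set.Ioc a c) (Set.Ioi c) := Set.Ioc_disjoint_Ioi le_rfl
  have := MeasureTheory.setIntegral_union hdisj measurableSet_Ioi hIoc hIoi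
  rw [← h1] at this
  rw [integral_exp_neg_mul_Ioi hb a, integral_exp_neg_mul_Ioi hb c] at this
  have h3 := eq_sub_of_add_eq this.symm
  rw [h3]; ring

section R
variable {E : Type*} [MeasurableSpace E] (κ : ℝ → Kernel E E)
  (hk : ∀ t, 0 ≤ t → IsMarkovKernel (κ t))
  (hjm : ∀ g : E → ℝ, Measurable g → (∃ D, ∀ x, |g x| ≤ D) →
      Measurable fun p : ℝ × E => Usg κ p.1 g p.2)

include hk hjm in
lemma res_integrand_integrable {ν : ℝ} (hν : 0 < ν) {g : E → ℝ} (hg : Measurable g) {D : ℝ}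
    (hD0 : 0 ≤ D) (hD : ∀ z, |g z| ≤ D) (x : E) :
    IntegrableOn (fun u => Real.exp (-ν * u) * Usg κ u g x) (Set.Ioi (0:ℝ)) := by
  have hmeas : Measurable fun u => Real.exp (-ν * u) * Usg κ u g x :=
    (Real.measurable_exp.comp (measurable_const.mul measurable_id)).mul
      ((hjm g hg ⟨D, hD⟩).comp (measurable_id.prodMk measurable_const))
  refine Integrable.mono' ((exp_neg_integrableOn_Ioi 0 hν).const_mul D)
    hmeas.stronglyMeasurable.aestronglyMeasurable ?_
  rw [MeasureTheory.ae_restrict_iff' measurableSet_Ioi]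
  refine Eventually.of_forall fun u hu => ?_
  have h1 : |Usg κ u g x| ≤ D := usg_bound κ hk (le_of_lt hu) hg hD0 hD x
  have h2 : (0:ℝ) < Real.exp (-ν * u) := Real.exp_pos _
  calc ‖Real.exp (-ν * u) * Usg κ u g x‖ = Real.exp (-ν * u) * |Usg κ u g x| := by
        rw [Real.norm_eq_abs, abs_mul, abs_of_pos h2]
    _ ≤ Real.exp (-ν * u) * D := by nlinarith
    _ = D * Real.exp (-ν * u) := by ring

include hk hjm in
lemma res_bound {ν : ℝ} (hν : 0 < ν) {g : E → ℝ} (hg : Measurable g) {D : ℝ}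
    (hD0 : 0 ≤ D) (hD : ∀ z, |g z| ≤ D) (x : E) : |Res κ ν g x| ≤ D / ν := by
  have h0 := norm_integral_le_integral_norm (μ := volume.restrict (Set.Ioi (0:ℝ)))
    (fun u => Real.exp (-ν * u) * Usg κ u g x)
  rw [Real.norm_eq_abs] at h0
  have h0 : |Res κ ν g x| ≤ ∫ u in Set.Ioi (0:ℝ), ‖Real.exp (-ν * u) * Usg κ u g x‖ := h0
  have h1 : ∫ u in Set.Ioi (0:ℝ), ‖Real.exp (-ν * u) * Usg κ u g x‖
      ≤ ∫ u in Set.Ioi (0:ℝ), D * Real.exp (-ν * u) := by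
    refine setIntegral_mono_on (res_integrand_integrable κ hk hjm hν hg hD0 hD x).norm
      ((exp_neg_integrableOn_Ioi 0 hν).const_mul D) measurableSet_Ioi fun u hu => ?_
    have h1 : |Usg κ u g x| ≤ D := usg_bound κ hk (le_of_lt hu) hg hD0 hD x
    have h2 : (0:ℝ) < Real.exp (-ν * u) := Real.exp_pos _
    calc ‖Real.exp (-ν * u) * Usg κ u g x‖ = Real.exp (-ν * u) * |Usg κ u g x| := by
          rw [Real.norm_eq_abs, abs_mul, abs_of_pos h2]
      _ ≤ Real.exp (-ν * u) * D := by nlinarith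
      _ = D * Real.exp (-ν * u) := by ring
  have h2 : ∫ u in Set.Ioi (0:ℝ), D * Real.exp (-ν * u) = D / ν := by
    rw [MeasureTheory.integral_const_mul, integral_exp_neg_mul_Ioi hν 0]
    simp [mul_div_assoc, div_eq_mul_inv]
  linarith

include hjm in
lemma res_measurable (ν : ℝ) {g : E → ℝ} (hg : Measurable g) {D : ℝ}
    (hD : ∀ z, |g z| ≤ D) : Measurable fun x => Res κ ν g x := by
  have hmeas : StronglyMeasurable fun p : E × ℝ => Real.exp (-ν * p.2) * Usg κ p.2 g p.1 := by
    refine Measurable.stronglyMeasurable ?_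
    exact (Real.measurable_exp.comp (measurable_const.mul measurable_snd)).mul
      ((hjm g hg ⟨D, hD⟩).comp (measurable_snd.prodMk measurable_fst))
  exact (hmeas.integral_prod_right' (ν := volume.restrict (Set.Ioi (0:ℝ)))).measurable

end R

section F1
variable {E : Type*} [MeasurableSpace E] (κ : ℝ → Kernel E E)
  (hk : ∀ t, 0 ≤ t → IsMarkovKernel (κ t))
  (hsemi : ∀ t s, 0 ≤ t → 0 ≤ s → κ (t + s) = (κ s).comp (κ t))
  (hjm : ∀ g : E → ℝ, Measurable g → (∃ D, ∀ x, |g x| ≤ D) →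
      Measurable fun p : ℝ × E => Usg κ p.1 g p.2)

include hk hjm in
lemma res_norm_integral_bound {ν : ℝ} (hν : 0 < ν) {g : E → ℝ} (hg : Measurable g) {D : ℝ}
    (hD0 : 0 ≤ D) (hD : ∀ z, |g z| ≤ D) (y : E) :
    ∫ u in Set.Ioi (0:ℝ), ‖Real.exp (-ν * u) * Usg κ u g y‖ ≤ D / ν := by
  have h1 : ∫ u in Set.Ioi (0:ℝ), ‖Real.exp (-ν * u) * Usg κ u g y‖
      ≤ ∫ u in Set.Ioi (0:ℝ), D * Real.exp (-ν * u) := by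
    refine setIntegral_mono_on (res_integrand_integrable κ hk hjm hν hg hD0 hD y).norm
      ((exp_neg_integrableOn_Ioi 0 hν).const_mul D) measurableSet_Ioi fun u hu => ?_
    have hb : |Usg κ u g y| ≤ D := usg_bound κ hk (le_of_lt hu) hg hD0 hD y
    have h2 : (0:ℝ) < Real.exp (-ν * u) := Real.exp_pos _
    calc ‖Real.exp (-ν * u) * Usg κ u g y‖ = Real.exp (-ν * u) * |Usg κ u g y| := by
          rw [Real.norm_eq_abs, abs_mul, abs_of_pos h2]
      _ ≤ Real.exp (-ν * u) * D := by nlinarith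
      _ = D * Real.exp (-ν * u) := by ring
  have h2 : ∫ u in Set.Ioi (0:ℝ), D * Real.exp (-ν * u) = D / ν := by
    rw [MeasureTheory.integral_const_mul, integral_exp_neg_mul_Ioi hν 0]
    simp [mul_div_assoc, div_eq_mul_inv]
  linarith

include hk hsemi hjm in
lemma usg_res {s ν : ℝ} (hs : 0 ≤ s) (hν : 0 < ν) {g : E → ℝ} (hg : Measurable g) {D : ℝ}
    (hD0 : 0 ≤ D) (hD : ∀ z, |g z| ≤ D) (x : E) :
    Usg κ s (Res κ ν g) x
      = ∫ u in Set.Ioi (0:ℝ), Real.exp (-ν * u) * Usg κ (s + u) g x := by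
  haveI := hk s hs
  set μ := κ s x with hμ
  set m := volume.restrict (Set.Ioi (0:ℝ)) with hm
  set F : E × ℝ → ℝ := fun p => Real.exp (-ν * p.2) * Usg κ p.2 g p.1 with hF
  have hFmeas : Measurable F :=
    (Real.measurable_exp.comp (measurable_const.mul measurable_snd)).mul
      ((hjm g hg ⟨D, hD⟩).comp (measurable_snd.prodMk measurable_fst))
  have hInt : Integrable F (μ.prod m) := by
    rw [MeasureTheory.integrable_prod_iff hFmeas.stronglyMeasurable.aestronglyMeasurable]
    constructor
    · exact Eventually.of_forall fun y => res_integrand_integrable κ hk hjm hν hg hD0 hD y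
    · refine Integrable.mono' (integrable_const (D / ν))
        (hFmeas.stronglyMeasurable.norm.integral_prod_right').aestronglyMeasurable
        (Eventually.of_forall fun y => ?_)
      have hnn : 0 ≤ ∫ u, ‖F (y, u)‖ ∂m := integral_nonneg fun u => norm_nonneg _
      rw [Real.norm_eq_abs, abs_of_nonneg hnn]
      exact res_norm_integral_bound κ hk hjm hν hg hD0 hD y
  have hswap := MeasureTheory.integral_integral_swap
    (f := fun y u => F (y, u)) (μ := μ) (ν := m) hInt
  have hl : Usg κ s (Res κ ν g) x = ∫ y, ∫ u, F (y, u) ∂m ∂μ := rfl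
  rw [hl, hswap]
  refine setIntegral_congr_fun measurableSet_Ioi fun u hu => ?_
  have h1 : ∫ y, F (y, u) ∂μ = Real.exp (-ν * u) * ∫ y, Usg κ u g y ∂μ := by
    simp only [hF]
    exact MeasureTheory.integral_const_mul _ _
  have h2 : (∫ y, Usg κ u g y ∂μ) = Usg κ (s + u) g x := by
    rw [usg_add κ hk hsemi hs (le_of_lt hu) hg hD x]
    rfl
  rw [h1, h2]

end F1

section Calc4

/-- Shift of an integral over `Ioi 0`. -/
lemma integral_Ioi_shift (F : ℝ → ℝ) (s : ℝ) :
    ∫ u in Set.Ioi (0:ℝ), F (s + u) = ∫ r in Set.Ioi s, F r := by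
  rw [← MeasureTheory.integral_indicator measurableSet_Ioi,
    ← MeasureTheory.integral_indicator measurableSet_Ioi,
    ← MeasureTheory.integral_add_right_eq_self (fun r => (Set.Ioi s).indicator F r) s]
  congr 1
  funext u
  by_cases hu : 0 < u
  · rw [Set.indicator_of_mem (Set.mem_Ioi.mpr hu),
      Set.indicator_of_mem (Set.mem_Ioi.mpr (by linarith : s < u + s))]
    rw [add_comm]
  · rw [Set.indicator_of_notMem (fun hmem => hu (Set.mem_Ioi.mp hmem)),
      Set.indicator_of_notMem (fun hmem => hu (by have := Set.mem_Ioi.mp hmem; linarith))]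

lemma integral_exp_mul_Ioo {c : ℝ} (hc : c ≠ 0) {r : ℝ} (hr : 0 ≤ r) :
    ∫ s in Set.Ioo (0:ℝ) r, Real.exp (c * s) = (Real.exp (c * r) - 1) / c := by
  have h1 : ∫ s in Set.Ioo (0:ℝ) r, Real.exp (c * s)
      = ∫ s in Set.Ioc (0:ℝ) r, Real.exp (c * s) :=
    (MeasureTheory.integral_Ioc_eq_integral_Ioo).symm
  have h2 : ∫ s in Set.Ioc (0:ℝ) r, Real.exp (c * s) = ∫ s in (0:ℝ)..r, Real.exp (c * s) :=
    (intervalIntegral.integral_of_le hr).symm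
  have h3 : ∫ s in (0:ℝ)..r, Real.exp (c * s)
      = Real.exp (c * r) / c - Real.exp (c * 0) / c := by
    refine intervalIntegral.integral_eq_sub_of_hasDerivAt (f := fun s => Real.exp (c * s) / c)
      (fun x _ => ?_) ?_
    · have hd : HasDerivAt (fun s : ℝ => Real.exp (c * s)) (Real.exp (c * x) * c) x := by
        simpa using ((hasDerivAt_id' x).const_mul c).exp
      have := hd.div_const c
      simpa [mul_div_assoc, div_self hc] using this
    · exact (Real.continuous_exp.comp (continuous_const.mul continuous_id)).intervalIntegrable 0 r
  rw [h1, h2, h3]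
  simp [mul_zero, Real.exp_zero]
  ring

lemma exp_h_integrable {h : ℝ → ℝ} (hm : Measurable h) {C : ℝ} (hC : ∀ r, |h r| ≤ C)
    {μ : ℝ} (hμ : 0 < μ) :
    MeasureTheory.IntegrableOn (fun r => Real.exp (-μ * r) * h r) (Set.Ioi (0:ℝ)) := by
  refine MeasureTheory.Integrable.mono' ((exp_neg_integrableOn_Ioi 0 hμ).const_mul C)
    ((Real.measurable_exp.comp (measurable_const.mul measurable_id)).mul
      hm).stronglyMeasurable.aestronglyMeasurable (Filter.Eventually.of_forall fun r => ?_)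
  have h2 : (0:ℝ) < Real.exp (-μ * r) := Real.exp_pos _
  calc ‖Real.exp (-μ * r) * h r‖ = Real.exp (-μ * r) * |h r| := by
        rw [Real.norm_eq_abs, abs_mul, abs_of_pos h2]
    _ ≤ Real.exp (-μ * r) * C := by nlinarith [hC r, abs_nonneg (h r)]
    _ = C * Real.exp (-μ * r) := by ring

/-- The key resolvent-equation computation for bounded measurable `h`. -/
lemma calc4 {h : ℝ → ℝ} (hm : Measurable h) {C : ℝ} (hC0 : 0 ≤ C) (hC : ∀ r, |h r| ≤ C)
    {μ ν : ℝ} (hμ : 0 < μ) (hν : 0 < ν) (hne : ν ≠ μ) :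
    (∫ s in Set.Ioi (0:ℝ), Real.exp (-μ * s)
        * ∫ u in Set.Ioi (0:ℝ), Real.exp (-ν * u) * h (s + u))
      = ((∫ r in Set.Ioi (0:ℝ), Real.exp (-μ * r) * h r)
          - ∫ r in Set.Ioi (0:ℝ), Real.exp (-ν * r) * h r) / (ν - μ) := by
  set c : ℝ := ν - μ with hc
  have hcne : c ≠ 0 := sub_ne_zero.mpr hne
  set m := MeasureTheory.volume.restrict (Set.Ioi (0:ℝ)) with hmdef
  set f : ℝ × ℝ → ℝ :=
    fun p => if p.1 < p.2 then Real.exp (c * p.1) * (Real.exp (-ν * p.2) * h p.2) else 0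
    with hf
  have hfmeas : Measurable f := by
    refine Measurable.ite (measurableSet_lt measurable_fst measurable_snd) ?_ measurable_const
    exact (Real.measurable_exp.comp (measurable_const.mul measurable_fst)).mul
      ((Real.measurable_exp.comp (measurable_const.mul measurable_snd)).mul
        (hm.comp measurable_snd))
  -- pointwise bound
  have hfbound : ∀ s r : ℝ, ‖f (s, r)‖
      ≤ (C * Real.exp (c * s)) * (Set.Ioi s).indicator (fun r => Real.exp (-ν * r)) r := by
    intro s r
    by_cases hsr : s < r
    · rw [Set.indicator_of_mem (Set.mem_Ioi.mpr hsr)]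
      have h2 : (0:ℝ) < Real.exp (c * s) := Real.exp_pos _
      have h3 : (0:ℝ) < Real.exp (-ν * r) := Real.exp_pos _
      simp only [hf, if_pos hsr]
      calc ‖Real.exp (c * s) * (Real.exp (-ν * r) * h r)‖
          = Real.exp (c * s) * (Real.exp (-ν * r) * |h r|) := by
            rw [Real.norm_eq_abs, abs_mul, abs_mul, abs_of_pos h2, abs_of_pos h3]
        _ ≤ Real.exp (c * s) * (Real.exp (-ν * r) * C) := by
            gcongr
            exact hC r
        _ = C * Real.exp (c * s) * Real.exp (-ν * r) := by ring
    · rw [Set.indicator_of_notMem (by simpa using hsr)]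
      simp only [hf, if_neg hsr]
      simp
  -- sections integrable
  have hsec : ∀ s : ℝ, MeasureTheory.Integrable (fun r => f (s, r)) m := by
    intro s
    have hind : MeasureTheory.Integrable
        ((Set.Ioi s).indicator (fun r => Real.exp (-ν * r))) m := by
      refine MeasureTheory.Integrable.restrict ?_
      rw [MeasureTheory.integrable_indicator_iff measurableSet_Ioi]
      exact exp_neg_integrableOn_Ioi s hν
    refine MeasureTheory.Integrable.mono' (hind.const_mul (C * Real.exp (c * s)))
      ((hfmeas.comp (measurable_prodMk_left)).stronglyMeasurable.aestronglyMeasurable)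
      (Filter.Eventually.of_forall fun r => hfbound s r)
  have houter : ∀ s : ℝ, 0 < s → (∫ r, ‖f (s, r)‖ ∂m) ≤ (C / ν) * Real.exp (-μ * s) := by
    intro s hs
    have hind : MeasureTheory.Integrable
        ((Set.Ioi s).indicator (fun r => Real.exp (-ν * r))) m := by
      refine MeasureTheory.Integrable.restrict ?_
      rw [MeasureTheory.integrable_indicator_iff measurableSet_Ioi]
      exact exp_neg_integrableOn_Ioi s hν
    have h1 : (∫ r, ‖f (s, r)‖ ∂m)
        ≤ ∫ r, (C * Real.exp (c * s)) * (Set.Ioi s).indicator (fun r => Real.exp (-ν * r)) r ∂m :=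
      MeasureTheory.integral_mono (hsec s).norm (hind.const_mul _) (fun r => hfbound s r)
    have h2 : (∫ r, (C * Real.exp (c * s))
          * (Set.Ioi s).indicator (fun r => Real.exp (-ν * r)) r ∂m)
        = (C * Real.exp (c * s)) * Real.exp (-ν * s) / ν := by
      rw [MeasureTheory.integral_const_mul]
      have h3 : (∫ r, (Set.Ioi s).indicator (fun r => Real.exp (-ν * r)) r ∂m)
          = ∫ r in Set.Ioi (0:ℝ) ∩ Set.Ioi s, Real.exp (-ν * r) := by
        rw [hmdef, MeasureTheory.setIntegral_indicator measurableSet_Ioi]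
      rw [h3, Set.inter_eq_self_of_subset_right (Set.Ioi_subset_Ioi hs.le),
        integral_exp_neg_mul_Ioi hν s]
      ring
    have h4 : (C * Real.exp (c * s)) * Real.exp (-ν * s) / ν = (C / ν) * Real.exp (-μ * s) := by
      have harg : c * s + -ν * s = -μ * s := by rw [hc]; ring
      calc (C * Real.exp (c * s)) * Real.exp (-ν * s) / ν
          = (C / ν) * (Real.exp (c * s) * Real.exp (-ν * s)) := by ring
        _ = (C / ν) * Real.exp (-μ * s) := by rw [← Real.exp_add, harg]
    linarith
  -- integrability on the product
  have hInt : MeasureTheory.Integrable f (m.prod m) := by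
    rw [MeasureTheory.integrable_prod_iff hfmeas.stronglyMeasurable.aestronglyMeasurable]
    constructor
    · exact Filter.Eventually.of_forall hsec
    · refine MeasureTheory.Integrable.mono'
        ((exp_neg_integrableOn_Ioi 0 hμ).const_mul (C / ν))
        (hfmeas.norm.stronglyMeasurable.integral_prod_right').aestronglyMeasurable ?_
      rw [hmdef, MeasureTheory.ae_restrict_iff' measurableSet_Ioi]
      refine Filter.Eventually.of_forall fun s hs => ?_
      have hnn : 0 ≤ ∫ r, ‖f (s, r)‖ ∂m := MeasureTheory.integral_nonneg fun r => norm_nonneg _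
      rw [Real.norm_eq_abs, abs_of_nonneg hnn]
      exact houter s hs
  -- rewrite LHS as double integral of f
  have hLHS : (∫ s in Set.Ioi (0:ℝ), Real.exp (-μ * s)
        * ∫ u in Set.Ioi (0:ℝ), Real.exp (-ν * u) * h (s + u))
      = ∫ s, (∫ r, f (s, r) ∂m) ∂m := by
    rw [hmdef]
    refine MeasureTheory.setIntegral_congr_fun measurableSet_Ioi fun s hs => ?_
    have hstep1 : (∫ u in Set.Ioi (0:ℝ), Real.exp (-ν * u) * h (s + u))
        = Real.exp (ν * s) * ∫ r in Set.Ioi s, Real.exp (-ν * r) * h r := by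
      have he : (fun u => Real.exp (-ν * u) * h (s + u))
          = fun u => (fun r => Real.exp (ν * s) * (Real.exp (-ν * r) * h r)) (s + u) := by
        funext u
        show Real.exp (-ν * u) * h (s + u)
          = Real.exp (ν * s) * (Real.exp (-ν * (s + u)) * h (s + u))
        have harg : ν * s + -ν * (s + u) = -ν * u := by ring
        rw [← harg, Real.exp_add, mul_assoc]
      rw [he, integral_Ioi_shift (fun r => Real.exp (ν * s) * (Real.exp (-ν * r) * h r)) s,
        MeasureTheory.integral_const_mul]
    have hstep2 : (∫ r in Set.Ioi s, Real.exp (-ν * r) * h r)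
        = ∫ r, (if s < r then Real.exp (-ν * r) * h r else 0) ∂m := by
      have : (fun r => if s < r then Real.exp (-ν * r) * h r else 0)
          = (Set.Ioi s).indicator (fun r => Real.exp (-ν * r) * h r) := by
        funext r
        by_cases hsr : s < r
        · rw [if_pos hsr, Set.indicator_of_mem (Set.mem_Ioi.mpr hsr)]
        · rw [if_neg hsr, Set.indicator_of_notMem (by simpa using hsr)]
      rw [this, hmdef, MeasureTheory.setIntegral_indicator measurableSet_Ioi,
        Set.inter_eq_self_of_subset_right (Set.Ioi_subset_Ioi (le_of_lt hs))]
    rw [hstep1, hstep2, ← mul_assoc, ← Real.exp_add, ← MeasureTheory.integral_const_mul]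
    have harg : -μ * s + ν * s = c * s := by rw [hc]; ring
    congr 1
    funext r
    simp only [hf]
    rw [mul_ite, mul_zero, harg]
  -- swap
  have hswap := MeasureTheory.integral_integral_swap (f := fun s r => f (s, r))
    (μ := m) (ν := m) hInt
  rw [hLHS, hswap]
  -- compute inner integral
  have hRHS : (∫ r, (∫ s, f (s, r) ∂m) ∂m)
      = ∫ r in Set.Ioi (0:ℝ),
          (Real.exp (-μ * r) * h r - Real.exp (-ν * r) * h r) * (1 / c) := by
    rw [hmdef]
    refine MeasureTheory.setIntegral_congr_fun measurableSet_Ioi fun r hr => ?_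
    have h1 : (fun s => f (s, r))
        = (Set.Iio r).indicator (fun s => Real.exp (c * s) * (Real.exp (-ν * r) * h r)) := by
      funext s
      by_cases hsr : s < r
      · simp only [hf, if_pos hsr]
        rw [Set.indicator_of_mem (Set.mem_Iio.mpr hsr)]
      · simp only [hf, if_neg hsr]
        rw [Set.indicator_of_notMem (by simpa using hsr)]
    rw [h1, MeasureTheory.setIntegral_indicator measurableSet_Iio, Set.Ioi_inter_Iio,
      MeasureTheory.integral_mul_const, integral_exp_mul_Ioo hcne (le_of_lt hr)]
    have : Real.exp (-ν * r) * (Real.exp (c * r) - 1)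
        = Real.exp (-μ * r) - Real.exp (-ν * r) := by
      rw [mul_sub, ← Real.exp_add, mul_one]
      congr 2
      rw [hc]; ring
    linear_combination (h r / c) * this
  rw [hRHS, MeasureTheory.integral_mul_const,
    MeasureTheory.integral_sub (exp_h_integrable hm hC hμ) (exp_h_integrable hm hC hν),
    mul_one_div, hc]

end Calc4

section ResEq
variable {E : Type*} [MeasurableSpace E] (κ : ℝ → Kernel E E)
  (hk : ∀ t, 0 ≤ t → IsMarkovKernel (κ t))
  (hsemi : ∀ t s, 0 ≤ t → 0 ≤ s → κ (t + s) = (κ s).comp (κ t))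
  (hjm : ∀ g : E → ℝ, Measurable g → (∃ D, ∀ x, |g x| ≤ D) →
      Measurable fun p : ℝ × E => Usg κ p.1 g p.2)

include hk hsemi hjm in
/-- The resolvent equation. -/
lemma res_res {μ ν : ℝ} (hμ : 0 < μ) (hν : 0 < ν) (hne : ν ≠ μ) {g : E → ℝ}
    (hg : Measurable g) {D : ℝ} (hD0 : 0 ≤ D) (hD : ∀ z, |g z| ≤ D) (x : E) :
    Res κ μ (Res κ ν g) x = (Res κ μ g x - Res κ ν g x) / (ν - μ) := by
  set h : ℝ → ℝ := fun r => if 0 < r then Usg κ r g x else 0 with hh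
  have hm : Measurable h := by
    refine Measurable.ite (measurableSet_lt measurable_const measurable_id) ?_ measurable_const
    exact (hjm g hg ⟨D, hD⟩).comp (measurable_id.prodMk measurable_const)
  have hC : ∀ r, |h r| ≤ D := by
    intro r
    by_cases hr : 0 < r
    · simp only [hh, if_pos hr]
      exact usg_bound κ hk hr.le hg hD0 hD x
    · simp only [hh, if_neg hr, abs_zero]
      exact hD0
  have hL : Res κ μ (Res κ ν g) x
      = ∫ s in Set.Ioi (0:ℝ), Real.exp (-μ * s)
          * ∫ u in Set.Ioi (0:ℝ), Real.exp (-ν * u) * h (s + u) := by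
    refine MeasureTheory.setIntegral_congr_fun measurableSet_Ioi fun s hs => ?_
    have h1 : Usg κ s (Res κ ν g) x
        = ∫ u in Set.Ioi (0:ℝ), Real.exp (-ν * u) * Usg κ (s + u) g x :=
      usg_res κ hk hsemi hjm (le_of_lt hs) hν hg hD0 hD x
    rw [h1]
    congr 1
    refine MeasureTheory.setIntegral_congr_fun measurableSet_Ioi fun u hu => ?_
    have hsu : (0:ℝ) < s + u := by
      have := Set.mem_Ioi.mp hs; have := Set.mem_Ioi.mp hu; linarith
    simp only [hh, if_pos hsu]
  have hRμ : (∫ r in Set.Ioi (0:ℝ), Real.exp (-μ * r) * h r) = Res κ μ g x := by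
    refine MeasureTheory.setIntegral_congr_fun measurableSet_Ioi fun r hr => ?_
    simp only [hh, if_pos (Set.mem_Ioi.mp hr)]
  have hRν : (∫ r in Set.Ioi (0:ℝ), Real.exp (-ν * r) * h r) = Res κ ν g x := by
    refine MeasureTheory.setIntegral_congr_fun measurableSet_Ioi fun r hr => ?_
    simp only [hh, if_pos (Set.mem_Ioi.mp hr)]
  rw [hL, calc4 hm hD0 hC hμ hν hne, hRμ, hRν]

include hk hsemi hjm in
lemma res_comm {μ ν : ℝ} (hμ : 0 < μ) (hν : 0 < ν) {g : E → ℝ}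
    (hg : Measurable g) {D : ℝ} (hD0 : 0 ≤ D) (hD : ∀ z, |g z| ≤ D) (x : E) :
    Res κ μ (Res κ ν g) x = Res κ ν (Res κ μ g) x := by
  by_cases hne : ν = μ
  · rw [hne]
  · rw [res_res κ hk hsemi hjm hμ hν hne hg hD0 hD x,
      res_res κ hk hsemi hjm hν hμ (fun hc => hne hc.symm) hg hD0 hD x]
    have h1 : ν - μ ≠ 0 := sub_ne_zero.mpr hne
    have h2 : μ - ν ≠ 0 := sub_ne_zero.mpr fun hc => hne hc.symm
    field_simp
    ring

include hk hsemi hjm in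
lemma res_expand {μ ν : ℝ} (hμ : 0 < μ) (hν : 0 < ν) (hne : μ ≠ ν) {g : E → ℝ}
    (hg : Measurable g) {D : ℝ} (hD0 : 0 ≤ D) (hD : ∀ z, |g z| ≤ D) (x : E) :
    Res κ μ g x = Res κ ν g x + (ν - μ) * Res κ ν (Res κ μ g) x := by
  have h1 := res_res κ hk hsemi hjm hν hμ hne hg hD0 hD x
  have h2 : μ - ν ≠ 0 := sub_ne_zero.mpr hne
  field_simp at h1
  linarith [h1]

include hk hjm in
lemma res_iter_props {ν : ℝ} (hν : 0 < ν) {h : E → ℝ} {D : ℝ} (hmh : Measurable h)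
    (hD0 : 0 ≤ D) (hD : ∀ x, |h x| ≤ D) :
    ∀ k : ℕ, Measurable ((Res κ ν)^[k] h) ∧ ∀ x, |(Res κ ν)^[k] h x| ≤ D / ν ^ k := by
  intro k
  induction k with
  | zero => exact ⟨hmh, by simpa using hD⟩
  | succ k ih =>
    obtain ⟨ihm, ihb⟩ := ih
    have hb0 : 0 ≤ D / ν ^ k := by positivity
    rw [Function.iterate_succ_apply']
    refine ⟨res_measurable κ hjm ν ihm ihb, fun x => ?_⟩
    have := res_bound κ hk hjm hν ihm hb0 ihb x
    calc |Res κ ν ((Res κ ν)^[k] h) x| ≤ D / ν ^ k / ν := this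
      _ = D / ν ^ (k + 1) := by rw [div_div, ← pow_succ]

end ResEq

section Neumann
variable {E : Type*} [MetricSpace E] [MeasurableSpace E] [BorelSpace E] (κ : ℝ → Kernel E E)
  (hk : ∀ t, 0 ≤ t → IsMarkovKernel (κ t))
  (hsemi : ∀ t s, 0 ≤ t → 0 ≤ s → κ (t + s) = (κ s).comp (κ t))
  (hjm : ∀ g : E → ℝ, Measurable g → (∃ D, ∀ x, |g x| ≤ D) →
      Measurable fun p : ℝ × E => Usg κ p.1 g p.2)

include hk hsemi hjm in
lemma res_iter_comm {μ ν : ℝ} (hμ : 0 < μ) (hν : 0 < ν) {g : E → ℝ}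
    (hg : Measurable g) {D : ℝ} (hD0 : 0 ≤ D) (hD : ∀ z, |g z| ≤ D) :
    ∀ k : ℕ, (Res κ ν)^[k] (Res κ μ g) = Res κ μ ((Res κ ν)^[k] g) := by
  intro k
  induction k with
  | zero => rfl
  | succ k ih =>
    have hp := res_iter_props κ hk hjm hν hg hD0 hD k
    rw [Function.iterate_succ_apply', ih]
    funext x
    rw [res_comm κ hk hsemi hjm hν hμ hp.1 (by positivity) hp.2 x,
      Function.iterate_succ_apply']

include hk hsemi hjm in
lemma res_telescope {μ ν : ℝ} (hμ : 0 < μ) (hν : 0 < ν) (hne : μ ≠ ν) {g : E → ℝ}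
    (hg : Measurable g) {D : ℝ} (hD0 : 0 ≤ D) (hD : ∀ z, |g z| ≤ D) :
    ∀ K : ℕ, ∀ x, Res κ μ g x
      = (∑ k ∈ Finset.range (K + 1), (ν - μ) ^ k * (Res κ ν)^[k + 1] g x)
        + (ν - μ) ^ (K + 1) * (Res κ ν)^[K + 1] (Res κ μ g) x := by
  intro K
  induction K with
  | zero =>
    intro x
    have h1 := res_expand κ hk hsemi hjm hμ hν hne hg hD0 hD x
    simpa [Function.iterate_one] using h1
  | succ K ih =>
    intro x
    have hp := res_iter_props κ hk hjm hν hg hD0 hD (K + 1)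
    -- rewrite the remainder
    have hrem : (Res κ ν)^[K + 1] (Res κ μ g) x
        = (Res κ ν)^[K + 1 + 1] g x + (ν - μ) * (Res κ ν)^[K + 1 + 1] (Res κ μ g) x := by
      have hTk := res_iter_comm κ hk hsemi hjm hμ hν hg hD0 hD (K + 1)
      have hexp := res_expand κ hk hsemi hjm hμ hν hne hp.1 (by positivity) hp.2 x
      have h1 : (Res κ ν)^[K + 1 + 1] g = Res κ ν ((Res κ ν)^[K + 1] g) :=
        Function.iterate_succ_apply' _ _ _
      have h2 : (Res κ ν)^[K + 1 + 1] (Res κ μ g) = Res κ ν ((Res κ ν)^[K + 1] (Res κ μ g)) :=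
        Function.iterate_succ_apply' _ _ _
      rw [hTk, hexp, h1, h2, hTk]
    have := ih x
    rw [hrem] at this
    rw [this]
    conv_rhs => rw [Finset.sum_range_succ]
    ring

include hk hsemi hjm in
lemma res_extend {ν : ℝ} (hν : 0 < ν)
    (hP : ∀ g : E → ℝ, MemC0 g → MemC0 (Res κ ν g)) {μ : ℝ} (hμ : 0 < μ) (hlt : μ < 2 * ν) :
    ∀ g : E → ℝ, MemC0 g → MemC0 (Res κ μ g) := by
  intro g hg
  by_cases hμν : μ = ν
  · subst hμν; exact hP g hg
  obtain ⟨D, hD0, hD⟩ := memC0_bounded hg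
  have hgm : Measurable g := hg.1.measurable
  have hiterC0 : ∀ k : ℕ, MemC0 ((Res κ ν)^[k] g) := by
    intro k
    induction k with
    | zero => exact hg
    | succ k ih => rw [Function.iterate_succ_apply']; exact hP _ ih
  refine memC0_approx fun ε hε => ?_
  set q : ℝ := |ν - μ| / ν with hq
  have hq0 : 0 ≤ q := by positivity
  have hq1 : q < 1 := by
    rw [hq, div_lt_one hν, abs_lt]
    constructor <;> linarith
  have htend : Filter.Tendsto (fun K : ℕ => (D / μ) * q ^ K) Filter.atTop (nhds 0) := by
    have := tendsto_pow_atTop_nhds_zero_of_lt_one hq0 hq1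
    simpa using this.const_mul (D / μ)
  obtain ⟨K, hK⟩ := (htend.eventually (gt_mem_nhds hε)).exists
  refine ⟨fun x => ∑ k ∈ Finset.range (K + 1), (ν - μ) ^ k * (Res κ ν)^[k + 1] g x, ?_, ?_⟩
  · exact memC0_sum _ _ fun k _ => memC0_const_mul _ (hiterC0 (k + 1))
  · intro x
    have htel := res_telescope κ hk hsemi hjm hμ hν hμν hgm hD0 hD K x
    have hResμ : Measurable (Res κ μ g) := res_measurable κ hjm μ hgm hD
    have hResμb : ∀ z, |Res κ μ g z| ≤ D / μ := fun z => res_bound κ hk hjm hμ hgm hD0 hD z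
    have hbd := (res_iter_props κ hk hjm hν hResμ (by positivity) hResμb (K + 1)).2 x
    have h1 : |(ν - μ) ^ (K + 1) * (Res κ ν)^[K + 1] (Res κ μ g) x|
        ≤ (D / μ) * q ^ (K + 1) := by
      rw [abs_mul, abs_pow]
      calc |ν - μ| ^ (K + 1) * |(Res κ ν)^[K + 1] (Res κ μ g) x|
          ≤ |ν - μ| ^ (K + 1) * (D / μ / ν ^ (K + 1)) := by
            gcongr
        _ = (D / μ) * q ^ (K + 1) := by
            rw [hq, div_pow]
            field_simp
      -- done
    have h2 : (∑ k ∈ Finset.range (K + 1), (ν - μ) ^ k * (Res κ ν)^[k + 1] g x)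
        - Res κ μ g x = -((ν - μ) ^ (K + 1) * (Res κ ν)^[K + 1] (Res κ μ g) x) := by
      rw [htel]; ring
    rw [h2, abs_neg]
    have hqm : (D / μ) * q ^ (K + 1) ≤ (D / μ) * q ^ K := by
      have h3 : q ^ (K + 1) ≤ q ^ K := pow_le_pow_of_le_one hq0 hq1.le (Nat.le_succ K)
      have hDμ : (0:ℝ) ≤ D / μ := by positivity
      exact mul_le_mul_of_nonneg_left h3 hDμ
    linarith

include hk hsemi hjm in
lemma P_all (l : ℝ) (hl : 0 < l)
    (hR : ∀ f : E → ℝ, MemC0 f → MemC0 (Res κ l f)) :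
    ∀ μ : ℝ, 0 < μ → ∀ g : E → ℝ, MemC0 g → MemC0 (Res κ μ g) := by
  have hchain : ∀ k : ℕ, ∀ g : E → ℝ, MemC0 g → MemC0 (Res κ (l * (3 / 2) ^ k) g) := by
    intro k
    induction k with
    | zero => simpa using hR
    | succ k ih =>
      have hpos : 0 < l * (3 / 2 : ℝ) ^ k := by positivity
      refine res_extend κ hk hsemi hjm hpos ih ?_ ?_
      · positivity
      · rw [pow_succ]
        nlinarith
  intro μ hμ g hg
  have h32 : (1 : ℝ) < 3 / 2 := by norm_num
  obtain ⟨k, hk2⟩ := pow_unbounded_of_one_lt (μ / l) h32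
  have hpos : 0 < l * (3 / 2 : ℝ) ^ k := by positivity
  refine res_extend κ hk hsemi hjm hpos (hchain k) hμ ?_ g hg
  rw [div_lt_iff₀ hl] at hk2
  nlinarith
end Neumann

section Poly

lemma poly_approx {l : ℝ} (hl : 0 < l) {t : ℝ} (ht : 0 ≤ t) {ε : ℝ} (hε : 0 < ε) :
    ∃ p : Polynomial ℝ,
      MeasureTheory.IntegrableOn
        (fun u => |Real.exp (-l * u) * p.eval (Real.exp (-l * u))
          - (if t < u then Real.exp (-l * u) else 0)|) (Set.Ioi (0:ℝ))
      ∧ (∫ u in Set.Ioi (0:ℝ), |Real.exp (-l * u) * p.eval (Real.exp (-l * u))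
          - (if t < u then Real.exp (-l * u) else 0)|) ≤ ε := by
  set c : ℝ := Real.exp (-l * t) with hcdef
  have hc0 : 0 < c := Real.exp_pos _
  set η : ℝ := min (c / 2) (l * ε / 4) with hηdef
  have hη0 : 0 < η := lt_min (by positivity) (by positivity)
  have hηc : η ≤ c / 2 := min_le_left _ _
  have hηε : η ≤ l * ε / 4 := min_le_right _ _
  have hcη : 0 < c - η := by linarith
  set φ : ℝ → ℝ := fun y => min 1 (max 0 ((c - y) / η)) with hφdef
  have hφcont : Continuous φ :=
    continuous_const.min (continuous_const.max ((continuous_const.sub continuous_id).div_const η))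
  have hφ01 : ∀ y, 0 ≤ φ y ∧ φ y ≤ 1 := fun y =>
    ⟨le_min zero_le_one (le_max_left _ _), min_le_left _ _⟩
  obtain ⟨p, hp⟩ := exists_polynomial_near_of_continuousOn 0 1 φ hφcont.continuousOn
    (l * ε / 4) (by positivity)
  set t₂ : ℝ := -Real.log (c - η) / l with ht₂def
  have hlogc : Real.log (c - η) ≤ Real.log c := Real.log_le_log hcη (by linarith)
  have hlogc2 : Real.log c = -l * t := by rw [hcdef, Real.log_exp]
  have htt₂ : t ≤ t₂ := by
    rw [ht₂def, le_div_iff₀ hl]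
    nlinarith [hlogc, hlogc2]
  have hexpt₂ : Real.exp (-l * t₂) = c - η := by
    rw [ht₂def]
    have : -l * (-Real.log (c - η) / l) = Real.log (c - η) := by field_simp
    rw [this, Real.exp_log hcη]
  -- the dominating function
  set B : ℝ → ℝ := fun u => (l * ε / 4) * Real.exp (-l * u)
    + (Set.Ioc t t₂).indicator (fun u => Real.exp (-l * u)) u with hBdef
  have hBint : MeasureTheory.IntegrableOn B (Set.Ioi (0:ℝ)) := by
    refine MeasureTheory.Integrable.add ((exp_neg_integrableOn_Ioi 0 hl).const_mul _) ?_
    refine MeasureTheory.Integrable.restrict ?_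
    rw [MeasureTheory.integrable_indicator_iff measurableSet_Ioc]
    exact (exp_neg_integrableOn_Ioi t hl).mono_set Set.Ioc_subset_Ioi_self
  -- pointwise bound
  have hpt : ∀ u : ℝ, 0 < u → |Real.exp (-l * u) * p.eval (Real.exp (-l * u))
      - (if t < u then Real.exp (-l * u) else 0)| ≤ B u := by
    intro u hu
    set y : ℝ := Real.exp (-l * u) with hydef
    have hy0 : 0 < y := Real.exp_pos _
    have hy1 : y < 1 := by
      rw [hydef, ← Real.exp_zero]
      apply Real.exp_lt_exp.mpr
      nlinarith
    have hymem : y ∈ Set.Icc (0:ℝ) 1 := ⟨hy0.le, hy1.le⟩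
    have hpφ : |p.eval y - φ y| ≤ l * ε / 4 := (hp y hymem).le
    have hsplit : Real.exp (-l * u) * p.eval y - (if t < u then Real.exp (-l * u) else 0)
        = y * (p.eval y - φ y) + y * (φ y - (if t < u then 1 else 0)) := by
      by_cases htu : t < u <;> simp [htu, hydef] <;> ring
    have hsecond : y * |φ y - (if t < u then 1 else 0)|
        ≤ (Set.Ioc t t₂).indicator (fun u => Real.exp (-l * u)) u := by
      rcases le_or_gt u t with hut | htu
      · -- u ≤ t : φ y = 0 and indicator of t < u is 0
        have hyc : c ≤ y := Real.exp_le_exp.mpr (by nlinarith)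
        have hφ0 : φ y = 0 := by
          have h1 : (c - y) / η ≤ 0 := div_nonpos_of_nonpos_of_nonneg (by linarith) hη0.le
          rw [hφdef]
          simp only [max_eq_left h1, min_eq_right zero_le_one]
        rw [hφ0, if_neg (not_lt.mpr hut)]
        simp only [sub_zero, abs_zero, mul_zero]
        exact Set.indicator_nonneg (fun u _ => (Real.exp_pos _).le) u
      · rcases le_or_gt u t₂ with hut₂ | ht₂u
        · -- t < u ≤ t₂
          rw [Set.indicator_of_mem (Set.mem_Ioc.mpr ⟨htu, hut₂⟩)]
          have h1 : |φ y - (if t < u then 1 else 0)| ≤ 1 := by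
            rw [if_pos htu, abs_le]
            have := hφ01 y
            constructor <;> linarith [this.1, this.2]
          calc y * |φ y - (if t < u then 1 else 0)| ≤ y * 1 := by
                exact mul_le_mul_of_nonneg_left h1 hy0.le
            _ = Real.exp (-l * u) := by rw [mul_one]
        · -- u > t₂ : φ y = 1
          have hyc : y ≤ c - η := by
            rw [← hexpt₂]
            exact Real.exp_le_exp.mpr (by nlinarith)
          have hφ1 : φ y = 1 := by
            have h1 : (1:ℝ) ≤ (c - y) / η := (le_div_iff₀ hη0).mpr (by linarith)
            rw [hφdef]
            simp only
            rw [max_eq_right (by linarith : (0:ℝ) ≤ (c - y) / η), min_eq_left h1]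
          rw [hφ1, if_pos (lt_of_le_of_lt htt₂ ht₂u)]
          simp only [sub_self, abs_zero, mul_zero]
          exact Set.indicator_nonneg (fun u _ => (Real.exp_pos _).le) u
    calc |Real.exp (-l * u) * p.eval y - (if t < u then Real.exp (-l * u) else 0)|
        = |y * (p.eval y - φ y) + y * (φ y - (if t < u then 1 else 0))| := by rw [hsplit]
      _ ≤ |y * (p.eval y - φ y)| + |y * (φ y - (if t < u then 1 else 0))| := abs_add_le _ _
      _ ≤ y * (l * ε / 4) + (Set.Ioc t t₂).indicator (fun u => Real.exp (-l * u)) u := by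
          rw [abs_mul, abs_mul, abs_of_pos hy0]
          exact add_le_add (mul_le_mul_of_nonneg_left hpφ hy0.le) hsecond
      _ ≤ B u := by
          rw [hBdef]
          have : y * (l * ε / 4) = (l * ε / 4) * Real.exp (-l * u) := by
            rw [hydef]; ring
          rw [this]
  -- measurability of the integrand
  have hmeas : Measurable fun u => |Real.exp (-l * u) * p.eval (Real.exp (-l * u))
      - (if t < u then Real.exp (-l * u) else 0)| := by
    have h1 : Measurable fun u : ℝ => Real.exp (-l * u) :=
      Real.measurable_exp.comp (measurable_const.mul measurable_id)
    have h2 : Measurable fun u : ℝ => p.eval (Real.exp (-l * u)) :=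
      p.continuous_aeval.measurable.comp h1
    exact ((h1.mul h2).sub
      (Measurable.ite (measurableSet_lt measurable_const measurable_id) h1
        measurable_const)).abs
  have hint : MeasureTheory.IntegrableOn
      (fun u => |Real.exp (-l * u) * p.eval (Real.exp (-l * u))
        - (if t < u then Real.exp (-l * u) else 0)|) (Set.Ioi (0:ℝ)) := by
    refine MeasureTheory.Integrable.mono' hBint hmeas.stronglyMeasurable.aestronglyMeasurable ?_
    rw [MeasureTheory.ae_restrict_iff' measurableSet_Ioi]
    refine Filter.Eventually.of_forall fun u hu => ?_
    rw [Real.norm_eq_abs, abs_abs]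
    exact hpt u hu
  refine ⟨p, hint, ?_⟩
  have hmono : (∫ u in Set.Ioi (0:ℝ), |Real.exp (-l * u) * p.eval (Real.exp (-l * u))
      - (if t < u then Real.exp (-l * u) else 0)|) ≤ ∫ u in Set.Ioi (0:ℝ), B u :=
    MeasureTheory.setIntegral_mono_on hint hBint measurableSet_Ioi fun u hu => hpt u hu
  have hBval : (∫ u in Set.Ioi (0:ℝ), B u) ≤ ε / 2 := by
    rw [hBdef, MeasureTheory.integral_add ((exp_neg_integrableOn_Ioi 0 hl).const_mul _)
      (by
        refine MeasureTheory.Integrable.restrict ?_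
        rw [MeasureTheory.integrable_indicator_iff measurableSet_Ioc]
        exact (exp_neg_integrableOn_Ioi t hl).mono_set Set.Ioc_subset_Ioi_self)]
    have h1 : (∫ u in Set.Ioi (0:ℝ), (l * ε / 4) * Real.exp (-l * u)) = ε / 4 := by
      rw [MeasureTheory.integral_const_mul, integral_exp_neg_mul_Ioi hl 0, mul_zero,
        Real.exp_zero]
      field_simp
    have h2 : (∫ u in Set.Ioi (0:ℝ),
        (Set.Ioc t t₂).indicator (fun u => Real.exp (-l * u)) u) = η / l := by
      have hsub : Set.Ioc t t₂ ⊆ Set.Ioi (0:ℝ) := fun u hu => lt_of_le_of_lt ht hu.1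
      rw [MeasureTheory.setIntegral_indicator measurableSet_Ioc,
        Set.inter_eq_self_of_subset_right hsub,
        integral_exp_neg_mul_Ioc hl htt₂, hexpt₂]
      rw [← hcdef]
      ring
    rw [h1, h2]
    have : η / l ≤ ε / 4 := by
      rw [div_le_iff₀ hl]
      calc η ≤ l * ε / 4 := hηε
        _ = ε / 4 * l := by ring
    linarith
  linarith

end Poly

section Assembly
variable {E : Type*} [MetricSpace E] [MeasurableSpace E] [BorelSpace E] (κ : ℝ → Kernel E E)
  (hk : ∀ t, 0 ≤ t → IsMarkovKernel (κ t))
  (hsemi : ∀ t s, 0 ≤ t → 0 ≤ s → κ (t + s) = (κ s).comp (κ t))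
  (hjm : ∀ g : E → ℝ, Measurable g → (∃ D, ∀ x, |g x| ≤ D) →
      Measurable fun p : ℝ × E => Usg κ p.1 g p.2)

include hk hsemi hjm in
lemma usg_resl_memC0 {l : ℝ} (hl : 0 < l)
    (hR : ∀ f : E → ℝ, MemC0 f → MemC0 (Res κ l f))
    {t : ℝ} (ht : 0 ≤ t) {g : E → ℝ} (hg : MemC0 g) :
    MemC0 (Usg κ t (Res κ l g)) := by
  obtain ⟨D, hD0, hD⟩ := memC0_bounded hg
  have hgm : Measurable g := hg.1.measurable
  have hPall := P_all κ hk hsemi hjm l hl hR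
  refine memC0_approx fun ε hε => ?_
  set X : ℝ := Real.exp (l * t) with hXdef
  have hX0 : 0 < X := Real.exp_pos _
  set ε' : ℝ := ε / ((D + 1) * X) with hε'def
  have hε'0 : 0 < ε' := by positivity
  obtain ⟨p, hpint, hpbound⟩ := poly_approx hl ht hε'0
  set n : ℕ := p.natDegree with hndef
  refine ⟨fun x => X * ∑ k ∈ Finset.range (n + 1),
      p.coeff k * Res κ (((k : ℝ) + 1) * l) g x, ?_, ?_⟩
  · refine memC0_const_mul X (memC0_sum _ _ fun k _ => memC0_const_mul _ ?_)
    exact hPall (((k : ℝ) + 1) * l) (by positivity) g hg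
  intro x
  -- the frozen trajectory function
  set h : ℝ → ℝ := fun r => if 0 < r then Usg κ r g x else 0 with hhdef
  have hm : Measurable h := by
    refine Measurable.ite (measurableSet_lt measurable_const measurable_id) ?_ measurable_const
    exact (hjm g hgm ⟨D, hD⟩).comp (measurable_id.prodMk measurable_const)
  have hC : ∀ r, |h r| ≤ D := by
    intro r
    by_cases hr : 0 < r
    · simp only [hhdef, if_pos hr]; exact usg_bound κ hk hr.le hgm hD0 hD x
    · simp only [hhdef, if_neg hr, abs_zero]; exact hD0
  set W : ℝ → ℝ := fun r => Real.exp (-l * r) * p.eval (Real.exp (-l * r)) with hWdef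
  set Ind : ℝ → ℝ := fun r => if t < r then Real.exp (-l * r) else 0 with hInddef
  -- c1 : pointwise expansion of W * h as a finite sum
  have hyk : ∀ (k : ℕ) (r : ℝ),
      (Real.exp (-l * r)) ^ (k + 1) = Real.exp (-(((k : ℝ) + 1) * l) * r) := by
    intro k r
    rw [← Real.exp_nat_mul]
    congr 1
    push_cast
    ring
  have c1 : (fun r => W r * h r) = fun r => ∑ k ∈ Finset.range (n + 1),
      p.coeff k * (Real.exp (-(((k : ℝ) + 1) * l) * r) * h r) := by
    funext r
    rw [hWdef]
    simp only
    rw [Polynomial.eval_eq_sum_range, ← hndef, Finset.mul_sum, Finset.sum_mul]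
    refine Finset.sum_congr rfl fun k _ => ?_
    rw [← hyk k r]
    ring
  have hterm_int : ∀ k ∈ Finset.range (n + 1), MeasureTheory.IntegrableOn
      (fun r => p.coeff k * (Real.exp (-(((k : ℝ) + 1) * l) * r) * h r)) (Set.Ioi (0:ℝ)) :=
    fun k _ => (exp_h_integrable hm hC (by positivity)).const_mul _
  have c2 : MeasureTheory.IntegrableOn (fun r => W r * h r) (Set.Ioi (0:ℝ)) := by
    rw [c1]
    exact MeasureTheory.integrable_finset_sum _ hterm_int
  have c3 : (∫ r in Set.Ioi (0:ℝ), W r * h r)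
      = ∑ k ∈ Finset.range (n + 1), p.coeff k * Res κ (((k : ℝ) + 1) * l) g x := by
    rw [c1, MeasureTheory.integral_finset_sum _ hterm_int]
    refine Finset.sum_congr rfl fun k _ => ?_
    rw [MeasureTheory.integral_const_mul]
    congr 1
    refine MeasureTheory.setIntegral_congr_fun measurableSet_Ioi fun r hr => ?_
    simp only [hhdef, if_pos (Set.mem_Ioi.mp hr)]
  -- c4 : representation of Usg t (Res l g)
  have c4 : Usg κ t (Res κ l g) x = X * ∫ r in Set.Ioi (0:ℝ), Ind r * h r := by
    rw [usg_res κ hk hsemi hjm ht hl hgm hD0 hD x]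
    have hstep : (∫ u in Set.Ioi (0:ℝ), Real.exp (-l * u) * Usg κ (t + u) g x)
        = ∫ u in Set.Ioi (0:ℝ), (fun r => X * (Real.exp (-l * r) * h r)) (t + u) := by
      refine MeasureTheory.setIntegral_congr_fun measurableSet_Ioi fun u hu => ?_
      have htu : 0 < t + u := by have := Set.mem_Ioi.mp hu; linarith
      simp only [hhdef, if_pos htu, hXdef]
      rw [← mul_assoc, ← Real.exp_add]
      congr 2
      ring
    rw [hstep, integral_Ioi_shift (fun r => X * (Real.exp (-l * r) * h r)) t,
      MeasureTheory.integral_const_mul]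
    congr 1
    have hindeq : (fun r => Ind r * h r)
        = (Set.Ioi t).indicator (fun r => Real.exp (-l * r) * h r) := by
      funext r
      by_cases htr : t < r
      · simp only [hInddef, if_pos htr]
        rw [Set.indicator_of_mem (Set.mem_Ioi.mpr htr)]
      · simp only [hInddef, if_neg htr, zero_mul]
        rw [Set.indicator_of_notMem (fun hc => htr (Set.mem_Ioi.mp hc))]
    rw [hindeq, MeasureTheory.setIntegral_indicator measurableSet_Ioi,
      Set.inter_eq_self_of_subset_right (Set.Ioi_subset_Ioi ht)]
  -- c5 : integrability of Ind * h
  have c5 : MeasureTheory.IntegrableOn (fun r => Ind r * h r) (Set.Ioi (0:ℝ)) := by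
    refine MeasureTheory.Integrable.mono' ((exp_neg_integrableOn_Ioi 0 hl).const_mul D)
      ?_ (Filter.Eventually.of_forall fun r => ?_)
    · refine ((Measurable.ite (measurableSet_lt measurable_const measurable_id)
        (Real.measurable_exp.comp (measurable_const.mul measurable_id))
        measurable_const).mul hm).stronglyMeasurable.aestronglyMeasurable
    · have h1 : |Ind r| ≤ Real.exp (-l * r) := by
        by_cases htr : t < r
        · simp only [hInddef, if_pos htr, abs_of_pos (Real.exp_pos _), le_refl]
        · simp only [hInddef, if_neg htr, abs_zero]
          exact (Real.exp_pos _).le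
      rw [Real.norm_eq_abs, abs_mul]
      calc |Ind r| * |h r| ≤ Real.exp (-l * r) * D :=
            mul_le_mul h1 (hC r) (abs_nonneg _) (Real.exp_pos _).le
        _ = D * Real.exp (-l * r) := by ring
  -- the final error bound
  have c6 : |(∫ r in Set.Ioi (0:ℝ), W r * h r) - ∫ r in Set.Ioi (0:ℝ), Ind r * h r|
      ≤ D * ε' := by
    rw [← MeasureTheory.integral_sub c2 c5]
    have h0 := MeasureTheory.norm_integral_le_integral_norm
      (μ := MeasureTheory.volume.restrict (Set.Ioi (0:ℝ))) (fun r => W r * h r - Ind r * h r)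
    rw [Real.norm_eq_abs] at h0
    refine le_trans h0 ?_
    have h1 : (∫ r in Set.Ioi (0:ℝ), ‖W r * h r - Ind r * h r‖)
        ≤ ∫ r in Set.Ioi (0:ℝ), D * |W r - Ind r| := by
      refine MeasureTheory.setIntegral_mono_on ((c2.sub c5).norm)
        (hpint.const_mul D) measurableSet_Ioi fun r hr => ?_
      have : W r * h r - Ind r * h r = (W r - Ind r) * h r := by ring
      rw [Real.norm_eq_abs, this, abs_mul]
      calc |W r - Ind r| * |h r| ≤ |W r - Ind r| * D :=
            mul_le_mul_of_nonneg_left (hC r) (abs_nonneg _)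
        _ = D * |W r - Ind r| := by ring
    refine le_trans h1 ?_
    rw [MeasureTheory.integral_const_mul]
    exact mul_le_mul_of_nonneg_left hpbound hD0
  have hGU : (X * ∑ k ∈ Finset.range (n + 1), p.coeff k * Res κ (((k : ℝ) + 1) * l) g x)
      - Usg κ t (Res κ l g) x
      = X * ((∫ r in Set.Ioi (0:ℝ), W r * h r) - ∫ r in Set.Ioi (0:ℝ), Ind r * h r) := by
    rw [c4, ← c3]
    ring
  rw [hGU, abs_mul, abs_of_pos hX0]
  have hfin : X * (D * ε') ≤ ε := by
    rw [hε'def]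
    rw [div_eq_mul_inv, mul_inv]
    have hXne : X ≠ 0 := ne_of_gt hX0
    have hD1 : (0:ℝ) < D + 1 := by linarith
    calc X * (D * (ε * ((D + 1)⁻¹ * X⁻¹))) = (D / (D + 1)) * ε := by
          field_simp
      _ ≤ 1 * ε := by
          apply mul_le_mul_of_nonneg_right _ hε.le
          rw [div_le_one hD1]
          linarith
      _ = ε := one_mul ε
  calc X * |(∫ r in Set.Ioi (0:ℝ), W r * h r) - ∫ r in Set.Ioi (0:ℝ), Ind r * h r|
      ≤ X * (D * ε') := mul_le_mul_of_nonneg_left c6 hX0.le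
    _ ≤ ε := hfin

end Assembly

/-- If `R_λ` maps `C₀(E)` into itself for some `λ > 0` and the range `R C₀(E)` is dense
in `C₀(E)` (w.r.t. the sup norm), then `U_t` maps `C₀(E)` into itself for all `t ≥ 0`. -/
theorem stmt_8 {E : Type*} [MetricSpace E] [LocallyCompactSpace E]
    [TopologicalSpace.SeparableSpace E] [MeasurableSpace E] [BorelSpace E]
    (κ : ℝ → Kernel E E)
    (hk : ∀ t, 0 ≤ t → IsMarkovKernel (κ t))
    (hsemi : ∀ t s, 0 ≤ t → 0 ≤ s → κ (t + s) = (κ s).comp (κ t))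
    (hjm : ∀ g : E → ℝ, Measurable g → (∃ D, ∀ x, |g x| ≤ D) →
      Measurable fun p : ℝ × E => Usg κ p.1 g p.2)
    (l : ℝ) (hl : 0 < l)
    (hR : ∀ f : E → ℝ, MemC0 f → MemC0 (Res κ l f))
    (hdense : ∀ f : E → ℝ, MemC0 f → ∀ ε : ℝ, 0 < ε →
      ∃ g : E → ℝ, MemC0 g ∧ ∀ x, |Res κ l g x - f x| ≤ ε) :
    ∀ t : ℝ, 0 ≤ t → ∀ f : E → ℝ, MemC0 f → MemC0 (Usg κ t f) := by
  intro t ht f hf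
  refine memC0_approx fun ε hε => ?_
  obtain ⟨g, hgC0, hgapp⟩ := hdense f hf (ε / 2) (by positivity)
  refine ⟨Usg κ t (Res κ l g), usg_resl_memC0 κ hk hsemi hjm hl hR ht hgC0, fun x => ?_⟩
  obtain ⟨Dg, hDg0, hDg⟩ := memC0_bounded hgC0
  obtain ⟨Df, hDf0, hDf⟩ := memC0_bounded hf
  have hgm : Measurable g := hgC0.1.measurable
  have hfm : Measurable f := hf.1.measurable
  have hRm : Measurable (Res κ l g) := res_measurable κ hjm l hgm hDg
  have hRb : ∀ z, |Res κ l g z| ≤ Dg / l := fun z => res_bound κ hk hjm hl hgm hDg0 hDg z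
  have hsub := usg_sub κ hk ht hRm hfm hRb hDf x
  rw [hsub]
  have hbd : ∀ z, |Res κ l g z - f z| ≤ ε / 2 := hgapp
  calc |Usg κ t (fun y => Res κ l g y - f y) x| ≤ ε / 2 :=
        usg_bound κ hk ht (hRm.sub hfm) (by positivity) hbd x
    _ ≤ ε := by linarith
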